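/- Let Φ be a biholomorphic function on the unit disk with Φ(0)=1, Re Φ > 0, Φ'(0) > 0, Φ''(0) ∈ ℝ, and |Φ''(0) + 2Φ'(0)^2| ≥ 2Φ'(0). If g(z) = z + b_2 z^2 + b_3 z^3 + ... satisfies z g'(z)/g(z) ≺ Φ, then |b_3| ≤ (Φ'(0)/2)|Φ''(0)/(2Φ'(0)) + Φ'(0)|. -/

import Mathlib

open Complex Metric Set FormalMultilinearSeries Filter
open scoped ENNReal NNReal

private lemma analyticAt_deriv' {f : ℂ → ℂ} {x : ℂ} (h : AnalyticAt ℂ f x) :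
    AnalyticAt ℂ (deriv f) x := by
  obtain ⟨s, hs, hf⟩ := h.exists_mem_nhds_analyticOnNhd
  exact hf.deriv x (mem_of_mem_nhds hs)

private lemma mobius_mem' {a w : ℂ} (ha : ‖a‖ < 1) (hw : ‖w‖ < 1) :
    ‖(w - a) / (1 - (starRingEnd ℂ) a * w)‖ < 1 := by
  have hden : ‖1 - (starRingEnd ℂ) a * w‖ ≠ 0 := by
    intro h
    have h1 : (1 : ℂ) - (starRingEnd ℂ) a * w = 0 := by
      simpa using (norm_eq_zero.mp h)
    have : ‖(starRingEnd ℂ) a * w‖ = 1 := by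
      have : (starRingEnd ℂ) a * w = 1 := by linear_combination -h1
      simp [this]
    rw [norm_mul, Complex.norm_conj] at this
    nlinarith [norm_nonneg a, norm_nonneg w]
  rw [norm_div, div_lt_one (lt_of_le_of_ne (norm_nonneg _) (Ne.symm hden))]
  have key : ‖w - a‖ ^ 2 < ‖1 - (starRingEnd ℂ) a * w‖ ^ 2 := by
    rw [← Complex.normSq_eq_norm_sq, ← Complex.normSq_eq_norm_sq]
    have h1 : Complex.normSq a < 1 := by rw [← Complex.sq_norm] at *; nlinarith [norm_nonneg a]
    have h2 : Complex.normSq w < 1 := by rw [← Complex.sq_norm] at *; nlinarith [norm_nonneg w]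
    simp only [Complex.normSq_apply, Complex.sub_re, Complex.sub_im, Complex.mul_re, Complex.mul_im,
      Complex.one_re, Complex.one_im, Complex.conj_re, Complex.conj_im] at *
    nlinarith
  nlinarith [norm_nonneg (w - a), norm_nonneg (1 - (starRingEnd ℂ) a * w)]

private lemma schwarz_pick' {φ : ℂ → ℂ} (hφd : DifferentiableOn ℂ φ (ball 0 1))
    (hφ0 : DifferentiableAt ℂ φ 0)
    (hmap : ∀ z ∈ ball (0:ℂ) 1, ‖φ z‖ < 1) :
    ‖deriv φ 0‖ ≤ 1 - ‖φ 0‖ ^ 2 := by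
  set a := φ 0 with ha
  have ha1 : ‖a‖ < 1 := hmap 0 (mem_ball_self one_pos)
  have hna : Complex.normSq a < 1 := by rw [← Complex.sq_norm]; nlinarith [norm_nonneg a]
  set ψ : ℂ → ℂ := fun z => (φ z - a) / (1 - (starRingEnd ℂ) a * φ z) with hψ
  have hden : ∀ z ∈ ball (0:ℂ) 1, (1 : ℂ) - (starRingEnd ℂ) a * φ z ≠ 0 := by
    intro z hz h
    have : ‖(starRingEnd ℂ) a * φ z‖ < 1 := by
      rw [norm_mul, Complex.norm_conj]
      nlinarith [norm_nonneg a, norm_nonneg (φ z), hmap z hz]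
    rw [show (starRingEnd ℂ) a * φ z = 1 by linear_combination -h] at this
    simp at this
  have hψd : DifferentiableOn ℂ ψ (ball 0 1) := by
    apply DifferentiableOn.div
    · exact hφd.sub (differentiableOn_const _)
    · exact (differentiableOn_const _).sub ((differentiableOn_const _).mul hφd)
    · exact hden
  have hψ0 : ψ 0 = 0 := by
    simp [hψ, ← ha]
  have hψmap : MapsTo ψ (ball (0:ℂ) 1) (ball (0:ℂ) 1) := by
    intro z hz
    rw [mem_ball_zero_iff]
    exact mobius_mem' ha1 (hmap z hz)
  have hb : ‖deriv ψ 0‖ ≤ 1 := by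
    rw [show (ball (0:ℂ) 1) = ball (ψ 0) 1 by rw [hψ0]] at hψmap
    exact Complex.norm_deriv_le_one_of_mapsTo_ball hψd (by rw [hψ0] at hψmap ⊢; exact hψmap.mono_right ball_subset_closedBall) one_pos
  have hd0 : (1:ℂ) - (starRingEnd ℂ) a * a ≠ 0 := hden 0 (mem_ball_self one_pos)
  have h1 : HasDerivAt (fun z => φ z - a) (deriv φ 0) 0 := (hφ0.hasDerivAt).sub_const a
  have h2 : HasDerivAt (fun z => (1:ℂ) - (starRingEnd ℂ) a * φ z)
      (-((starRingEnd ℂ) a * deriv φ 0)) 0 := by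
    simpa using ((hφ0.hasDerivAt).const_mul ((starRingEnd ℂ) a)).const_sub 1
  have hdiv := h1.fun_div h2 (by simpa [← ha] using hd0)
  have hψder : deriv ψ 0 = deriv φ 0 / (1 - (starRingEnd ℂ) a * a) := by
    rw [hψ, hdiv.deriv]
    rw [← ha, div_eq_div_iff (pow_ne_zero 2 hd0) hd0]
    ring
  rw [hψder] at hb
  have hcc : (starRingEnd ℂ) a * a = (Complex.normSq a : ℂ) := by
    rw [mul_comm, Complex.mul_conj]
  rw [hcc, norm_div] at hb
  have habs : ‖(1:ℂ) - (Complex.normSq a : ℂ)‖ = 1 - Complex.normSq a := by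
    rw [show (1:ℂ) - (Complex.normSq a : ℂ) = ((1 - Complex.normSq a : ℝ) : ℂ) by push_cast; ring]
    rw [Complex.norm_real, Real.norm_eq_abs, abs_of_pos (by linarith)]
  rw [habs, div_le_one (by linarith)] at hb
  rw [← Complex.sq_norm] at hb
  linarith

private lemma omega_coeffs' {ω : ℂ → ℂ} (hω : AnalyticOnNhd ℂ ω (ball 0 1)) (hω0 : ω 0 = 0)
    (hmap : ∀ z ∈ ball (0:ℂ) 1, ω z ∈ ball (0:ℂ) 1) :
    ‖deriv ω 0‖ ≤ 1 ∧
    ‖iteratedDeriv 2 ω 0‖ ≤ 2 * (1 - ‖deriv ω 0‖ ^ 2) := by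
  have hωd : DifferentiableOn ℂ ω (ball 0 1) :=
    fun z hz => ((hω z hz).differentiableAt).differentiableWithinAt
  have hmaps : MapsTo ω (ball (0:ℂ) 1) (ball (ω 0) 1) := by rw [hω0]; exact hmap
  have hc1 : ‖deriv ω 0‖ ≤ 1 :=
    Complex.norm_deriv_le_one_of_mapsTo_ball hωd (hmaps.mono_right ball_subset_closedBall) one_pos
  refine ⟨hc1, ?_⟩
  set φ : ℂ → ℂ := dslope ω 0 with hφ
  have hφ0v : φ 0 = deriv ω 0 := dslope_same ω 0
  obtain ⟨q, hq⟩ := hω 0 (mem_ball_self one_pos)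
  have hq' : HasFPowerSeriesAt φ q.fslope 0 := hq.has_fpower_series_dslope_fslope
  have hφa : AnalyticAt ℂ φ 0 := ⟨_, hq'⟩
  have hderφ : deriv φ 0 = q.coeff 2 := by
    rw [hq'.deriv, ← coeff_fslope]
    rfl
  have hiter : iteratedDeriv 2 ω 0 = 2 * q.coeff 2 := by
    obtain ⟨r, hr⟩ := hq
    have := hr.factorial_smul (y := (1:ℂ)) 2
    rw [iteratedDeriv_eq_iteratedFDeriv, ← this]
    show (Nat.factorial 2) • (q.coeff 2) = _
    simp [Nat.factorial, nsmul_eq_mul]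
  have hφd : DifferentiableOn ℂ φ (ball 0 1) :=
    (differentiableOn_dslope (isOpen_ball.mem_nhds (mem_ball_self one_pos))).mpr hωd
  have hφle : ∀ z ∈ ball (0:ℂ) 1, ‖φ z‖ ≤ 1 := by
    intro z hz
    rcases eq_or_ne z 0 with rfl | hz0
    · rw [hφ0v]; exact hc1
    · rw [hφ, dslope_of_ne _ hz0, slope_def_field, hω0, sub_zero, sub_zero, norm_div]
      rw [div_le_one (by simpa [norm_pos_iff] using hz0)]
      exact Complex.norm_le_norm_of_mapsTo_ball hωd (by rw [hω0] at hmaps; exact hmaps.mono_right ball_subset_closedBall) hω0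
        (by rwa [mem_ball_zero_iff] at hz)
  by_cases hcase : ∀ z ∈ ball (0:ℂ) 1, ‖φ z‖ < 1
  · have := schwarz_pick' hφd hφa.differentiableAt hcase
    rw [hderφ, hφ0v] at this
    rw [hiter, norm_mul]
    simp only [RCLike.norm_ofNat]
    nlinarith [norm_nonneg (q.coeff 2)]
  · push_neg at hcase
    obtain ⟨z0, hz0, hge⟩ := hcase
    have heq1 : ‖φ z0‖ = 1 := le_antisymm (hφle z0 hz0) hge
    have hmax : IsMaxOn (norm ∘ φ) (ball (0:ℂ) 1) z0 := by
      intro z hz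
      simp only [Function.comp_apply]
      rw [heq1]; exact hφle z hz
    have heqon := eqOn_of_isPreconnected_of_isMaxOn_norm (convex_ball (0:ℂ) 1).isPreconnected
      isOpen_ball hφd hz0 hmax
    have hev : φ =ᶠ[nhds (0:ℂ)] (fun _ => φ z0) := by
      filter_upwards [isOpen_ball.mem_nhds (mem_ball_self one_pos)] with z hz
      exact heqon hz
    have hd0 : deriv φ 0 = 0 := by rw [hev.deriv_eq]; simp
    have hq2 : q.coeff 2 = 0 := by rw [← hderφ, hd0]
    have habs1 : ‖deriv ω 0‖ = 1 := by
      rw [← hφ0v, heqon (mem_ball_self one_pos)]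
      exact heq1
    rw [hiter, hq2, habs1]
    simp

private lemma g_series' {g : ℂ → ℂ} {b : ℕ → ℂ}
    (hb : ∀ z ∈ ball (0:ℂ) 1, HasSum (fun n => b n * z ^ n) (g z)) :
    HasFPowerSeriesOnBall g (ofScalars ℂ b) 0 (1/2) := by
  have hsum := (hb (1/2 : ℂ) (by rw [mem_ball_zero_iff]; norm_num)).summable
  have htend : Tendsto (fun n => ‖ofScalars ℂ b n‖ * ((1/2 : NNReal) : ℝ) ^ n) atTop (nhds 0) := by
    have h0 := hsum.tendsto_atTop_zero
    have h1 : Tendsto (fun n => ‖b n * (1/2:ℂ) ^ n‖) atTop (nhds 0) := by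
      simpa using h0.norm
    convert h1 using 2 with n
    rw [ofScalars_norm, norm_mul, norm_pow]
    norm_num
  have hrad : (1/2 : ℝ≥0∞) ≤ (ofScalars ℂ b).radius := by
    have := (ofScalars ℂ b).le_radius_of_tendsto htend
    simpa using this
  refine ⟨hrad, by norm_num, ?_⟩
  intro y hy
  rw [mem_emetric_ball_zero_iff] at hy
  have hy1 : y ∈ ball (0:ℂ) 1 := by
    rw [mem_ball_zero_iff]
    have : (‖y‖₊ : ℝ≥0∞) < 1 := lt_of_lt_of_le hy (by norm_num)
    exact_mod_cast this
  rw [zero_add]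
  have := hb y hy1
  simp only [ofScalars_apply_eq, smul_eq_mul]
  exact this

private lemma g_coeffs' {g : ℂ → ℂ} {b : ℕ → ℂ}
    (hb : ∀ z ∈ ball (0:ℂ) 1, HasSum (fun n => b n * z ^ n) (g z)) (n : ℕ) :
    iteratedDeriv n g 0 = (n.factorial : ℂ) * b n := by
  have hp := g_series' hb
  have := hp.factorial_smul (y := (1:ℂ)) n
  rw [iteratedDeriv_eq_iteratedFDeriv, ← this, ofScalars_apply_eq]
  simp [nsmul_eq_mul]

private lemma ev_mul' {f h : ℂ → ℂ} (hf : AnalyticAt ℂ f 0) (hh : AnalyticAt ℂ h 0) :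
    deriv (fun z => f z * h z) =ᶠ[nhds (0:ℂ)] fun z => deriv f z * h z + f z * deriv h z := by
  filter_upwards [hf.eventually_analyticAt, hh.eventually_analyticAt] with z h1 h2
  exact deriv_mul h1.differentiableAt h2.differentiableAt

private lemma prod3' {f h : ℂ → ℂ} (hf : AnalyticAt ℂ f 0) (hh : AnalyticAt ℂ h 0) :
    iteratedDeriv 2 (fun z => f z * h z) 0
      = iteratedDeriv 2 f 0 * h 0 + 2 * deriv f 0 * deriv h 0 + f 0 * iteratedDeriv 2 h 0 ∧
    iteratedDeriv 3 (fun z => f z * h z) 0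
      = iteratedDeriv 3 f 0 * h 0 + 3 * iteratedDeriv 2 f 0 * deriv h 0
        + 3 * deriv f 0 * iteratedDeriv 2 h 0 + f 0 * iteratedDeriv 3 h 0 := by
  have hf1 := analyticAt_deriv' hf
  have hf2 := analyticAt_deriv' hf1
  have hh1 := analyticAt_deriv' hh
  have hh2 := analyticAt_deriv' hh1
  have ev1 := ev_mul' hf hh
  have ev2 : deriv (deriv (fun z => f z * h z)) =ᶠ[nhds (0:ℂ)]
      fun z => deriv (deriv f) z * h z + 2 * (deriv f z * deriv h z) + f z * deriv (deriv h) z := by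
    refine ev1.deriv.trans ?_
    filter_upwards [hf.eventually_analyticAt, hh.eventually_analyticAt,
      hf1.eventually_analyticAt, hh1.eventually_analyticAt] with z h1 h2 h3 h4
    rw [deriv_fun_add ((h3.fun_mul h2).differentiableAt) ((h1.fun_mul h4).differentiableAt),
        deriv_fun_mul h3.differentiableAt h2.differentiableAt,
        deriv_fun_mul h1.differentiableAt h4.differentiableAt]
    ring
  constructor
  · have e : iteratedDeriv 2 (fun z => f z * h z) 0 = deriv (deriv (fun z => f z * h z)) 0 := by
      simp [iteratedDeriv_succ, iteratedDeriv_one]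
    rw [e, ev2.eq_of_nhds]
    simp only [iteratedDeriv_succ, iteratedDeriv_one, iteratedDeriv_zero]
    ring
  · have e : iteratedDeriv 3 (fun z => f z * h z) 0
        = deriv (deriv (deriv (fun z => f z * h z))) 0 := by
      simp [iteratedDeriv_succ, iteratedDeriv_one]
    rw [e, ev2.deriv.eq_of_nhds]
    have A : HasDerivAt (fun z => deriv (deriv f) z * h z)
        (deriv (deriv (deriv f)) 0 * h 0 + deriv (deriv f) 0 * deriv h 0) 0 :=
      hf2.differentiableAt.hasDerivAt.mul hh.differentiableAt.hasDerivAt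
    have B : HasDerivAt (fun z => 2 * (deriv f z * deriv h z))
        (2 * (deriv (deriv f) 0 * deriv h 0 + deriv f 0 * deriv (deriv h) 0)) 0 :=
      (hf1.differentiableAt.hasDerivAt.mul hh1.differentiableAt.hasDerivAt).const_mul 2
    have C : HasDerivAt (fun z => f z * deriv (deriv h) z)
        (deriv f 0 * deriv (deriv h) 0 + f 0 * deriv (deriv (deriv h)) 0) 0 :=
      hf.differentiableAt.hasDerivAt.mul hh2.differentiableAt.hasDerivAt
    rw [((A.fun_add B).fun_add C).deriv]
    simp only [iteratedDeriv_succ, iteratedDeriv_one, iteratedDeriv_zero]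
    ring

private lemma comp3' {Φ ω : ℂ → ℂ} (hΦ : AnalyticOnNhd ℂ Φ (ball 0 1)) (hω : AnalyticAt ℂ ω 0)
    (hω0 : ω 0 = 0) :
    AnalyticAt ℂ (fun z => Φ (ω z)) 0 ∧
    deriv (fun z => Φ (ω z)) 0 = deriv Φ 0 * deriv ω 0 ∧
    iteratedDeriv 2 (fun z => Φ (ω z)) 0
      = iteratedDeriv 2 Φ 0 * (deriv ω 0) ^ 2 + deriv Φ 0 * iteratedDeriv 2 ω 0 := by
  have h01 : (0:ℂ) ∈ ball (0:ℂ) 1 := mem_ball_self one_pos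
  have hΦ0 : AnalyticAt ℂ Φ 0 := hΦ 0 h01
  have hΦ1 : AnalyticAt ℂ (deriv Φ) 0 := analyticAt_deriv' hΦ0
  have hω1 : AnalyticAt ℂ (deriv ω) 0 := analyticAt_deriv' hω
  have hcomp : AnalyticAt ℂ (fun z => Φ (ω z)) 0 := by
    have := (hω0 ▸ hΦ0).comp hω
    simpa [Function.comp_def] using this
  have hev : ∀ᶠ z in nhds (0:ℂ), ω z ∈ ball (0:ℂ) 1 ∧ AnalyticAt ℂ ω z := by
    have hcont : ContinuousAt ω 0 := hω.continuousAt
    have h1 : ∀ᶠ z in nhds (0:ℂ), ω z ∈ ball (0:ℂ) 1 :=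
      hcont (by rw [hω0] at *; exact isOpen_ball.mem_nhds h01)
    exact h1.and hω.eventually_analyticAt
  have ev1 : deriv (fun z => Φ (ω z)) =ᶠ[nhds (0:ℂ)] fun z => deriv Φ (ω z) * deriv ω z := by
    filter_upwards [hev] with z hz
    exact ((hΦ (ω z) hz.1).differentiableAt.hasDerivAt.comp z
      hz.2.differentiableAt.hasDerivAt).deriv
  refine ⟨hcomp, ?_, ?_⟩
  · rw [ev1.eq_of_nhds, hω0]
  · have e : iteratedDeriv 2 (fun z => Φ (ω z)) 0 = deriv (deriv (fun z => Φ (ω z))) 0 := by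
      simp [iteratedDeriv_succ, iteratedDeriv_one]
    rw [e, ev1.deriv.eq_of_nhds]
    have A : HasDerivAt (fun z => deriv Φ (ω z)) (deriv (deriv Φ) (ω 0) * deriv ω 0) 0 := by
      have := ((hω0 ▸ hΦ1).differentiableAt.hasDerivAt.comp 0 hω.differentiableAt.hasDerivAt)
      simpa [hω0, Function.comp_def] using this
    have B : HasDerivAt (deriv ω) (deriv (deriv ω) 0) 0 := hω1.differentiableAt.hasDerivAt
    rw [(A.fun_mul B).deriv, hω0]
    simp only [iteratedDeriv_succ, iteratedDeriv_one, iteratedDeriv_zero]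
    ring

theorem stmt_10 (Φ : ℂ → ℂ)
    (hΦa : AnalyticOn ℂ Φ (Metric.ball (0:ℂ) 1)) (hΦi : Set.InjOn Φ (Metric.ball (0:ℂ) 1)) (hΦ0 : Φ 0 = 1) (hΦre : ∀ z ∈ Metric.ball (0:ℂ) 1, 0 < (Φ z).re) (hd1re : 0 < (deriv Φ 0).re) (hd1im : (deriv Φ 0).im = 0)
    (hd2im : (iteratedDeriv 2 Φ 0).im = 0)
    (hcond : 2 * (deriv Φ 0).re ≤ ‖iteratedDeriv 2 Φ 0 + 2 * (deriv Φ 0) ^ 2‖)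
    (g : ℂ → ℂ) (b : ℕ → ℂ)
    (hb0 : b 0 = 0) (hb1 : b 1 = 1)
    (hb : ∀ z ∈ Metric.ball (0:ℂ) 1, HasSum (fun n => b n * z ^ n) (g z))
    (hsub : (∃ ω : ℂ → ℂ, AnalyticOn ℂ ω (Metric.ball (0:ℂ) 1) ∧ ω 0 = 0 ∧ (∀ z ∈ Metric.ball (0:ℂ) 1, ω z ∈ Metric.ball (0:ℂ) 1) ∧
          (∀ z ∈ Metric.ball (0:ℂ) 1, z ≠ 0 → z * deriv g z / g z = Φ (ω z)))) :
    ‖b 3‖ ≤ (deriv Φ 0).re / 2 * |(iteratedDeriv 2 Φ 0).re / (2 * (deriv Φ 0).re) + (deriv Φ 0).re| := by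
  obtain ⟨ω, hωa, hω0, hωmap, heq⟩ := hsub
  have h01 : (0:ℂ) ∈ ball (0:ℂ) 1 := mem_ball_self one_pos
  have hΦ' : AnalyticOnNhd ℂ Φ (ball 0 1) := (isOpen_ball.analyticOn_iff_analyticOnNhd).mp hΦa
  have hω' : AnalyticOnNhd ℂ ω (ball 0 1) := (isOpen_ball.analyticOn_iff_analyticOnNhd).mp hωa
  -- facts about g
  have hga : AnalyticAt ℂ g 0 := (g_series' hb).analyticAt
  have hg0 : g 0 = 0 := by
    have := g_coeffs' hb 0
    simpa [hb0] using this
  have hg1 : deriv g 0 = 1 := by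
    have := g_coeffs' hb 1
    rw [iteratedDeriv_one] at this
    simpa [hb1] using this
  have hg2 : iteratedDeriv 2 g 0 = 2 * b 2 := by
    have := g_coeffs' hb 2
    norm_num [Nat.factorial] at this
    exact this
  have hg3 : iteratedDeriv 3 g 0 = 6 * b 3 := by
    have := g_coeffs' hb 3
    norm_num [Nat.factorial] at this
    exact this
  -- g does not vanish on the punctured ball
  have hne : ∀ z ∈ ball (0:ℂ) 1, z ≠ 0 → g z ≠ 0 := by
    intro z hz hz0 hgz
    have h := heq z hz hz0
    rw [hgz, div_zero] at h
    have := hΦre (ω z) (hωmap z hz)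
    rw [← h] at this
    simp at this
  -- the functional identity
  have evFG : (fun z => z * deriv g z) =ᶠ[nhds (0:ℂ)] (fun z => g z * Φ (ω z)) := by
    filter_upwards [isOpen_ball.mem_nhds h01] with z hz
    rcases eq_or_ne z 0 with rfl | hz0
    · rw [hg0]; ring
    · have h := heq z hz hz0
      field_simp [hne z hz hz0] at h
      linear_combination h
  have E2 := evFG.iteratedDeriv_eq 2
  have E3 := evFG.iteratedDeriv_eq 3
  -- expand left side: f = id, h = deriv g
  have hid : AnalyticAt ℂ (fun z : ℂ => z) 0 := analyticAt_id
  have hdg : AnalyticAt ℂ (deriv g) 0 := analyticAt_deriv' hga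
  obtain ⟨L2, L3⟩ := prod3' hid hdg
  have hidd : deriv (fun z : ℂ => z) = fun _ => (1:ℂ) := deriv_id''
  have hid1 : deriv (fun z : ℂ => z) 0 = 1 := by rw [hidd]
  have hid2 : iteratedDeriv 2 (fun z : ℂ => z) 0 = 0 := by
    simp [iteratedDeriv_succ, iteratedDeriv_one, hidd]
  have hid3 : iteratedDeriv 3 (fun z : ℂ => z) 0 = 0 := by
    simp [iteratedDeriv_succ, iteratedDeriv_one, hidd]
  have hdg1 : deriv (deriv g) 0 = iteratedDeriv 2 g 0 := by
    simp [iteratedDeriv_succ, iteratedDeriv_one]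
  have hdg2 : iteratedDeriv 2 (deriv g) 0 = iteratedDeriv 3 g 0 := by
    simp [iteratedDeriv_succ, iteratedDeriv_one]
  rw [L2] at E2                  -- careful: L2 is about (fun z => z * deriv g z)
  rw [L3] at E3
  -- expand right side: f = g, h = Φ ∘ ω
  obtain ⟨hha, hh1, hh2⟩ := comp3' hΦ' (hω' 0 h01) hω0
  obtain ⟨R2, R3⟩ := prod3' hga hha
  rw [R2] at E2
  rw [R3] at E3
  have hΦω0 : Φ (ω 0) = 1 := by rw [hω0, hΦ0]
  simp only [hid2, hid1, hid3, hdg1, hdg2, hΦω0, hh1, hh2, hg0, hg1, hg2, hg3] at E2 E3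
  -- solve for coefficients
  set a1 := deriv Φ 0
  set A := iteratedDeriv 2 Φ 0
  set w1 := deriv ω 0
  set w2 := iteratedDeriv 2 ω 0
  have hb2 : b 2 = a1 * w1 := by linear_combination E2 / 2
  have hb3 : 4 * b 3 = A * w1 ^ 2 + 2 * a1 ^ 2 * w1 ^ 2 + a1 * w2 := by
    linear_combination E3 / 3 + 2 * a1 * w1 * hb2
  -- real forms
  set x := a1.re with hx
  set y := A.re with hy
  have ha1 : a1 = (x : ℂ) := by
    apply Complex.ext <;> simp [hx, hd1im]
  have hA : A = (y : ℂ) := by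
    apply Complex.ext <;> simp [hy, hd2im]
  -- Schwarz-Pick bounds
  obtain ⟨hw1, hw2⟩ := omega_coeffs' hω' hω0 hωmap
  set t := ‖w1‖ with ht
  -- bound |4 b3|
  have key : 4 * ‖b 3‖ ≤ |y + 2 * x ^ 2| * t ^ 2 + x * (2 * (1 - t ^ 2)) := by
    have h1 : ‖4 * b 3‖ ≤ ‖(A + 2 * a1 ^ 2) * w1 ^ 2‖ + ‖a1 * w2‖ := by
      rw [show (4:ℂ) * b 3 = (A + 2 * a1 ^ 2) * w1 ^ 2 + a1 * w2 by linear_combination hb3]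
      exact norm_add_le _ _
    have h2 : ‖(A + 2 * a1 ^ 2) * w1 ^ 2‖ = |y + 2 * x ^ 2| * t ^ 2 := by
      rw [norm_mul, norm_pow, ← ht]
      congr 1
      rw [hA, ha1, show ((y:ℂ) + 2 * (x:ℂ) ^ 2) = ((y + 2 * x ^ 2 : ℝ) : ℂ) by push_cast; ring,
        Complex.norm_real, Real.norm_eq_abs]
    have h3 : ‖a1 * w2‖ ≤ x * (2 * (1 - t ^ 2)) := by
      rw [norm_mul, ha1, Complex.norm_real, Real.norm_eq_abs, abs_of_pos hd1re]
      exact mul_le_mul_of_nonneg_left (by simpa [ht] using hw2) (le_of_lt hd1re)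
    calc 4 * ‖b 3‖ = ‖4 * b 3‖ := by
          rw [norm_mul]; norm_num
      _ ≤ _ := h1
      _ ≤ _ := by linarith
  -- hcond in real form
  have hK : 2 * x ≤ |y + 2 * x ^ 2| := by
    have : (A + 2 * a1 ^ 2) = ((y + 2 * x ^ 2 : ℝ) : ℂ) := by
      rw [hA, ha1]; push_cast; ring
    rw [this, Complex.norm_real, Real.norm_eq_abs] at hcond
    exact hcond
  have ht1 : t ≤ 1 := hw1
  have ht0 : 0 ≤ t := norm_nonneg _
  -- final
  have hRHS : (deriv Φ 0).re / 2 * |(iteratedDeriv 2 Φ 0).re / (2 * (deriv Φ 0).re) + (deriv Φ 0).re|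
      = |y + 2 * x ^ 2| / 4 := by
    rw [← hx, ← hy]
    rw [show y / (2 * x) + x = (y + 2 * x ^ 2) / (2 * x) by field_simp]
    rw [abs_div, abs_of_pos (by linarith : (0:ℝ) < 2 * x)]
    field_simp
    ring
  rw [hRHS]
  have h1t : 0 ≤ 1 - t ^ 2 := by nlinarith
  have step : |y + 2 * x ^ 2| * t ^ 2 + x * (2 * (1 - t ^ 2)) ≤ |y + 2 * x ^ 2| := by
    nlinarith [mul_nonneg (by linarith : (0:ℝ) ≤ |y + 2 * x ^ 2| - 2 * x) h1t]
  linarith
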